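/- In the relative neighborhood graph of a finite planar point set in general position, the angle at a common vertex u between two edges uv and uw is strictly greater than π/3 (60 degrees). -/

import Mathlib

noncomputable section

abbrev Pt := EuclideanSpace ℝ (Fin 2)

/-- The relative neighborhood graph of a finite point set `V`. -/
def rng (V : Finset Pt) : SimpleGraph Pt where
  Adj u v := u ≠ v ∧ u ∈ V ∧ v ∈ V ∧
    ∀ w ∈ V, w ≠ u → w ≠ v → ¬ (dist u w < dist u v ∧ dist v w < dist u v)
  symm := ⟨by
    rintro u v ⟨h1, h2, h3, h4⟩
    refine ⟨h1.symm, h3, h2, fun w hw hwv hwu h => ?_⟩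
    rw [dist_comm v u] at h
    exact h4 w hw hwu hwv ⟨h.2, h.1⟩⟩
  loopless := ⟨fun u h => h.1 rfl⟩

/-- General position: all pairwise distances between points of `V` are distinct. -/
def GenPos (V : Finset Pt) : Prop :=
  ∀ u v x y : Pt, u ∈ V → v ∈ V → x ∈ V → y ∈ V → u ≠ v → x ≠ y →
    s(u, v) ≠ s(x, y) → dist u v ≠ dist x y

/-- The ordered case: `dist u v < dist u w`. -/
lemma stmt_2_aux (V : Finset Pt) (u v w : Pt)
    (huv : (rng V).Adj u v) (huw : (rng V).Adj u w) (hvw : v ≠ w)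
    (hlt : dist u v < dist u w) (hne : dist w v ≠ dist u w) :
    Real.pi / 3 < EuclideanGeometry.angle v u w := by
  obtain ⟨hune, huV, hwV, hcond⟩ := huw
  have hvV : v ∈ V := huv.2.2.1
  have h1 : ¬ (dist u v < dist u w ∧ dist w v < dist u w) :=
    hcond v hvV (Ne.symm huv.1) hvw
  have h2 : dist u w ≤ dist w v := by
    by_contra h
    exact h1 ⟨hlt, lt_of_not_ge h⟩
  have h3 : dist u w < dist w v := lt_of_le_of_ne h2 (Ne.symm hne)
  have hpos : 0 < dist u v := dist_pos.mpr huv.1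
  have hposw : 0 < dist u w := dist_pos.mpr hune
  have hlaw := EuclideanGeometry.law_cos v u w
  have hdvw : dist v w = dist w v := dist_comm v w
  have hdvu : dist v u = dist u v := dist_comm v u
  have hdwu : dist w u = dist u w := dist_comm w u
  rw [hdvw, hdvu, hdwu] at hlaw
  have hcos : Real.cos (EuclideanGeometry.angle v u w) < 1 / 2 := by
    nlinarith [mul_pos hpos hposw, mul_self_lt_mul_self (le_of_lt hposw) h3,
      mul_lt_mul_of_pos_left hlt hpos]
  by_contra hle
  push_neg at hle
  have hc := Real.cos_le_cos_of_nonneg_of_le_pi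
    (EuclideanGeometry.angle_nonneg v u w)
    (by linarith [Real.pi_pos] : Real.pi / 3 ≤ Real.pi) hle
  rw [Real.cos_pi_div_three] at hc
  linarith

/-- Two edges of the relative neighborhood graph sharing the vertex `u`
make an angle greater than `π/3` at `u`. -/
theorem stmt_2 (V : Finset Pt) (hgp : GenPos V) (u v w : Pt)
    (huv : (rng V).Adj u v) (huw : (rng V).Adj u w) (hvw : v ≠ w) :
    Real.pi / 3 < EuclideanGeometry.angle v u w := by
  have hvV : v ∈ V := huv.2.2.1
  have hwV : w ∈ V := huw.2.2.1
  have huV : u ∈ V := huv.2.1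
  have hsym : s(u, v) ≠ s(u, w) := by
    intro h
    rw [Sym2.eq_iff] at h
    rcases h with ⟨_, h⟩ | ⟨h, _⟩
    · exact hvw h
    · exact huw.1 h
  have hdne : dist u v ≠ dist u w := hgp u v u w huV hvV huV hwV huv.1 huw.1 hsym
  rcases lt_or_gt_of_ne hdne with h | h
  · have hne : dist w v ≠ dist u w := by
      refine hgp w v u w hwV hvV huV hwV (Ne.symm hvw) huw.1 ?_
      intro hs
      rw [Sym2.eq_iff] at hs
      rcases hs with ⟨hs, _⟩ | ⟨_, hs⟩
      · exact huw.1 hs.symm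
      · exact huv.1 hs.symm
    exact stmt_2_aux V u v w huv huw hvw h hne
  · have hne : dist v w ≠ dist u v := by
      refine hgp v w u v hvV hwV huV hvV hvw huv.1 ?_
      intro hs
      rw [Sym2.eq_iff] at hs
      rcases hs with ⟨hs, _⟩ | ⟨_, hs⟩
      · exact huv.1 hs.symm
      · exact huw.1 hs.symm
    rw [EuclideanGeometry.angle_comm]
    exact stmt_2_aux V u w v huw huv (Ne.symm hvw) h hne
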